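/- The statistics dexc and ddes are equidistributed over the symmetric group S_n: for every n and k, the number of permutations π of {1,...,n} with dexc(π) = k equals the number with ddes(π) = k. Moreover the pairs (exc, dexc) and (des, ddes) are equidistributed over S_n. -/

import Mathlib

open Finset

def exc {n : ℕ} (π : Equiv.Perm (Fin n)) : ℕ :=
  (univ.filter (fun i => i < π i)).card

def dexc {n : ℕ} (π : Equiv.Perm (Fin n)) : ℕ :=
  ∑ i ∈ univ.filter (fun i => i < π i), ((π i : ℕ) - (i : ℕ))

def inv {n : ℕ} (π : Equiv.Perm (Fin n)) : ℕ :=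
  (univ.filter (fun p : Fin n × Fin n => p.1 < p.2 ∧ π p.2 < π p.1)).card


/-- The number of descents of π. -/
def des {n : ℕ} (π : Equiv.Perm (Fin n)) : ℕ :=
  (univ.filter (fun p : Fin n × Fin n => (p.2 : ℕ) = (p.1 : ℕ) + 1 ∧ π p.2 < π p.1)).card

/-- The descent difference of π. -/
def ddes {n : ℕ} (π : Equiv.Perm (Fin n)) : ℕ :=
  ∑ p ∈ univ.filter
      (fun p : Fin n × Fin n => (p.2 : ℕ) = (p.1 : ℕ) + 1 ∧ π p.2 < π p.1),
    ((π p.1 : ℕ) - (π p.2 : ℕ))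

namespace DD
open Equiv

variable {n : ℕ}

/-- The word of a permutation, padded with `N` beyond its length. -/
def W {N : ℕ} (π : Perm (Fin N)) (k : ℕ) : ℕ :=
  if h : k < N then (π ⟨k, h⟩ : ℕ) else N

lemma W_of_lt {N : ℕ} (π : Perm (Fin N)) {k : ℕ} (h : k < N) : W π k = π ⟨k, h⟩ := dif_pos h
lemma W_of_ge {N : ℕ} (π : Perm (Fin N)) {k : ℕ} (h : ¬ k < N) : W π k = N := dif_neg h

lemma W_lt {N : ℕ} (π : Perm (Fin N)) {k : ℕ} (h : k < N) : W π k < N := by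
  rw [W_of_lt π h]; exact (π ⟨k, h⟩).isLt

lemma W_lt_iff {N : ℕ} (π : Perm (Fin N)) {k : ℕ} : W π k < N ↔ k < N := by
  constructor
  · intro h; by_contra hk; rw [W_of_ge π hk] at h; omega
  · exact W_lt π

lemma W_inj {N : ℕ} (π : Perm (Fin N)) {k l : ℕ} (hk : k < N) (hl : l < N)
    (h : W π k = W π l) : k = l := by
  rw [W_of_lt π hk, W_of_lt π hl] at h
  have := π.injective (Fin.ext h)
  exact congrArg Fin.val this

lemma W_surj {N : ℕ} (π : Perm (Fin N)) {v : ℕ} (hv : v < N) : ∃ k, k < N ∧ W π k = v := by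
  refine ⟨(π⁻¹ ⟨v, hv⟩ : Fin N), (π⁻¹ ⟨v, hv⟩).isLt, ?_⟩
  rw [W_of_lt π (π⁻¹ ⟨v, hv⟩).isLt]
  simp

/-- cycle-type insertion of the value `n` -/
def finsC (σ : Perm (Fin n)) (i : Fin (n + 1)) : Fin (n + 1) → Fin (n + 1) := fun k =>
  if hk : (k : ℕ) = (i : ℕ) then Fin.last n
  else if hn : (k : ℕ) = n then (σ ⟨(i : ℕ), by have := i.isLt; omega⟩).castSucc
  else (σ ⟨(k : ℕ), by have := k.isLt; omega⟩).castSucc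

lemma finsC_injective (σ : Perm (Fin n)) (i : Fin (n + 1)) : Function.Injective (finsC σ i) := by
  intro a b h
  have hi := i.isLt
  unfold finsC at h
  have h' := congrArg Fin.val h
  clear h
  split_ifs at h' with h1 h2 h3 h4 h5 h6 h7 <;>
    simp only [Fin.coe_castSucc, Fin.val_last] at h' <;>
    first
      | (exact Fin.ext (by omega))
      | (exact absurd h' (σ _).isLt.ne')
      | (exact absurd h' (σ _).isLt.ne)
      | (have h2 := σ.injective (Fin.ext h');
         rw [Fin.mk.injEq] at h2; exact Fin.ext (by omega))

noncomputable def insC (σ : Perm (Fin n)) (i : Fin (n + 1)) : Perm (Fin (n + 1)) :=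
  Equiv.ofBijective _ ((Finite.injective_iff_bijective).mp (finsC_injective σ i))

lemma insC_apply (σ : Perm (Fin n)) (i : Fin (n + 1)) (k : Fin (n + 1)) :
    insC σ i k = finsC σ i k := rfl

lemma W_insC (σ : Perm (Fin n)) (i : Fin (n + 1)) (k : ℕ) :
    W (insC σ i) k =
      if k = (i : ℕ) then n else if k = n then W σ (i : ℕ)
      else if k < n then W σ k else n + 1 := by
  have hi := i.isLt
  by_cases h0 : k = (i : ℕ)
  · rw [if_pos h0]
    have hk : k < n + 1 := by omega
    rw [W_of_lt _ hk]
    show (finsC σ i ⟨k, hk⟩ : ℕ) = n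
    unfold finsC
    rw [dif_pos h0]
    exact Fin.val_last n
  · rw [if_neg h0]
    by_cases h1 : k = n
    · rw [if_pos h1]
      have hk : k < n + 1 := by omega
      rw [W_of_lt _ hk]
      show (finsC σ i ⟨k, hk⟩ : ℕ) = W σ (i : ℕ)
      unfold finsC
      rw [dif_neg h0, dif_pos h1, Fin.coe_castSucc, W_of_lt σ (show (i : ℕ) < n by omega)]
    · rw [if_neg h1]
      by_cases h2 : k < n
      · rw [if_pos h2]
        have hk : k < n + 1 := by omega
        rw [W_of_lt _ hk]
        show (finsC σ i ⟨k, hk⟩ : ℕ) = W σ k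
        unfold finsC
        rw [dif_neg h0, dif_neg h1, Fin.coe_castSucc, W_of_lt σ h2]
      · rw [if_neg h2, W_of_ge _ (by omega)]

/-- word-type insertion of the value `n` at position `j` -/
def finsD (σ : Perm (Fin n)) (j : Fin (n + 1)) : Fin (n + 1) → Fin (n + 1) := fun k =>
  if hk : (k : ℕ) < (j : ℕ) then (σ ⟨(k : ℕ), by have := j.isLt; omega⟩).castSucc
  else if he : (k : ℕ) = (j : ℕ) then Fin.last n
  else (σ ⟨(k : ℕ) - 1, by have := k.isLt; have := j.isLt; omega⟩).castSucc

lemma finsD_injective (σ : Perm (Fin n)) (j : Fin (n + 1)) : Function.Injective (finsD σ j) := by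
  intro a b h
  have hj := j.isLt
  unfold finsD at h
  have h' := congrArg Fin.val h
  clear h
  split_ifs at h' with h1 h2 h3 h4 h5 h6 h7 <;>
    simp only [Fin.coe_castSucc, Fin.val_last] at h' <;>
    first
      | (exact Fin.ext (by omega))
      | (exact absurd h' (σ _).isLt.ne')
      | (exact absurd h' (σ _).isLt.ne)
      | (have h2 := σ.injective (Fin.ext h');
         rw [Fin.mk.injEq] at h2; exact Fin.ext (by omega))

noncomputable def insD (σ : Perm (Fin n)) (j : Fin (n + 1)) : Perm (Fin (n + 1)) :=
  Equiv.ofBijective _ ((Finite.injective_iff_bijective).mp (finsD_injective σ j))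

lemma insD_apply (σ : Perm (Fin n)) (j : Fin (n + 1)) (k : Fin (n + 1)) :
    insD σ j k = finsD σ j k := rfl

lemma W_insD (σ : Perm (Fin n)) (j : Fin (n + 1)) (k : ℕ) :
    W (insD σ j) k =
      if k < (j : ℕ) then W σ k else if k = (j : ℕ) then n
      else if k ≤ n then W σ (k - 1) else n + 1 := by
  have hj := j.isLt
  by_cases h0 : k < (j : ℕ)
  · rw [if_pos h0]
    have hk : k < n + 1 := by omega
    rw [W_of_lt _ hk]
    show (finsD σ j ⟨k, hk⟩ : ℕ) = W σ k
    unfold finsD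
    rw [dif_pos h0, Fin.coe_castSucc, W_of_lt σ (show k < n by omega)]
  · rw [if_neg h0]
    by_cases h1 : k = (j : ℕ)
    · rw [if_pos h1]
      have hk : k < n + 1 := by omega
      rw [W_of_lt _ hk]
      show (finsD σ j ⟨k, hk⟩ : ℕ) = n
      unfold finsD
      rw [dif_neg h0, dif_pos h1]
      exact Fin.val_last n
    · rw [if_neg h1]
      by_cases h2 : k ≤ n
      · rw [if_pos h2]
        have hk : k < n + 1 := by omega
        rw [W_of_lt _ hk]
        show (finsD σ j ⟨k, hk⟩ : ℕ) = W σ (k - 1)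
        unfold finsD
        rw [dif_neg h0, dif_neg h1, Fin.coe_castSucc, W_of_lt σ (show k - 1 < n by omega)]
      · rw [if_neg h2, W_of_ge _ (by omega)]


/-! ### Statistics as multisets of pairs -/

def cterm {N : ℕ} (π : Perm (Fin N)) (k : ℕ) : Multiset (ℕ × ℕ) :=
  if k < W π k then {(W π k, k)} else 0

def dterm {N : ℕ} (π : Perm (Fin N)) (k : ℕ) : Multiset (ℕ × ℕ) :=
  if W π (k + 1) < W π k then {(W π k, W π (k + 1))} else 0

def PC {N : ℕ} (π : Perm (Fin N)) : Multiset (ℕ × ℕ) := ∑ k ∈ Finset.range N, cterm π k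

def PD {N : ℕ} (π : Perm (Fin N)) : Multiset (ℕ × ℕ) := ∑ k ∈ Finset.range N, dterm π k

def ed {N : ℕ} (π : Perm (Fin N)) (k : ℕ) : Multiset (ℕ × ℕ) :=
  if 0 < k ∧ W π k < W π (k - 1) then {(W π (k - 1), W π k)} else 0

lemma W_le {N : ℕ} (π : Perm (Fin N)) (k : ℕ) : W π k ≤ N := by
  unfold W; split
  · exact le_of_lt (Fin.isLt _)
  · exact le_refl N

lemma ed_succ {N : ℕ} (π : Perm (Fin N)) (k : ℕ) : ed π (k + 1) = dterm π k := by
  simp [ed, dterm]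

lemma dterm_top {N : ℕ} (π : Perm (Fin N)) {k : ℕ} (h : N ≤ k + 1) : dterm π k = 0 := by
  unfold dterm
  rw [if_neg]
  rw [W_of_ge π (by omega)]
  have := W_le π k
  omega

lemma PD_ed {N : ℕ} (σ : Perm (Fin N)) : PD σ = ∑ k ∈ Finset.range N, ed σ k := by
  cases N with
  | zero => rfl
  | succ m =>
    rw [PD, Finset.sum_range_succ, dterm_top σ (le_refl _), add_zero,
      Finset.sum_range_succ' (ed σ) m]
    have h0 : ed σ 0 = 0 := by simp [ed]
    rw [h0, add_zero]
    exact Finset.sum_congr rfl fun k _ => (ed_succ σ k).symm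

/-! ### The four insertion lemmas -/

lemma PC_insC_last (σ : Perm (Fin n)) : PC (insC σ (Fin.last n)) = PC σ := by
  have hW : ∀ k, k < n → W (insC σ (Fin.last n)) k = W σ k := by
    intro k hk
    rw [W_insC, Fin.val_last, if_neg (by omega), if_neg (by omega), if_pos hk]
  rw [PC, Finset.sum_range_succ]
  have hn : cterm (insC σ (Fin.last n)) n = 0 := by
    unfold cterm
    rw [W_insC, Fin.val_last, if_pos rfl, if_neg (lt_irrefl n)]
  rw [hn, add_zero, PC]
  exact Finset.sum_congr rfl fun k hk => by
    unfold cterm; rw [hW k (Finset.mem_range.mp hk)]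

lemma PC_insC (σ : Perm (Fin n)) (i : Fin (n + 1)) (hi : (i : ℕ) < n) :
    PC (insC σ i) + cterm σ (i : ℕ) = {((n : ℕ), (i : ℕ))} + PC σ := by
  set π' := insC σ i with hπ'
  set k₀ := (i : ℕ) with hk₀
  have hW : ∀ k, k ≠ k₀ → k < n → W π' k = W σ k := by
    intro k h1 h2
    rw [hπ', W_insC, if_neg h1, if_neg (by omega), if_pos h2]
  have hWk₀ : W π' k₀ = n := by rw [hπ', W_insC, if_pos rfl]
  have hWn : W π' n = W σ k₀ := by
    rw [hπ', W_insC, if_neg (by omega), if_pos rfl]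
  have hcn : cterm π' n = 0 := by
    unfold cterm
    rw [hWn, if_neg (by have := W_lt σ hi; omega)]
  have hck₀ : cterm π' k₀ = {((n : ℕ), k₀)} := by
    unfold cterm
    rw [hWk₀, if_pos hi]
  have hmem : k₀ ∈ Finset.range n := Finset.mem_range.mpr hi
  rw [PC, Finset.sum_range_succ, hcn, add_zero]
  rw [← Finset.add_sum_erase _ _ hmem, hck₀]
  have herase : ∑ k ∈ (Finset.range n).erase k₀, cterm π' k
      = ∑ k ∈ (Finset.range n).erase k₀, cterm σ k := by
    refine Finset.sum_congr rfl fun k hk => ?_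
    have h1 := Finset.mem_of_mem_erase hk
    have h2 := Finset.ne_of_mem_erase hk
    unfold cterm
    rw [hW k h2 (Finset.mem_range.mp h1)]
  rw [herase, PC, ← Finset.add_sum_erase _ (cterm σ) hmem]
  abel

lemma PD_insD_last (σ : Perm (Fin n)) : PD (insD σ (Fin.last n)) = PD σ := by
  have hW : ∀ k, k ≤ n → W (insD σ (Fin.last n)) k = W σ k := by
    intro k hk
    rcases lt_or_eq_of_le hk with h | h
    · rw [W_insD, Fin.val_last, if_pos h]
    · rw [W_insD, Fin.val_last, if_neg (by omega), if_pos h, h, W_of_ge σ (lt_irrefl n)]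
  rw [PD, Finset.sum_range_succ]
  have hn : dterm (insD σ (Fin.last n)) n = 0 := by
    unfold dterm
    rw [if_neg]
    rw [W_insD, Fin.val_last, if_neg (by omega), if_neg (by omega), if_neg (by omega),
      hW n (le_refl n), W_of_ge σ (lt_irrefl n)]
    omega
  rw [hn, add_zero, PD]
  refine Finset.sum_congr rfl fun k hk => ?_
  have hk' := Finset.mem_range.mp hk
  unfold dterm
  rw [hW k (by omega), hW (k+1) (by omega)]

lemma PD_insD (σ : Perm (Fin n)) (j : Fin (n + 1)) (hj : (j : ℕ) < n) :
    PD (insD σ j) + ed σ (j : ℕ) = {((n : ℕ), W σ (j : ℕ))} + PD σ := by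
  set π' := insD σ j with hπ'
  set j₀ := (j : ℕ) with hj₀
  have hW1 : ∀ k, k < j₀ → W π' k = W σ k := by
    intro k hk; rw [hπ', W_insD, if_pos hk]
  have hW2 : W π' j₀ = n := by rw [hπ', W_insD, if_neg (lt_irrefl j₀), if_pos rfl]
  have hW3 : ∀ k, j₀ < k → k ≤ n → W π' k = W σ (k - 1) := by
    intro k h1 h2
    rw [hπ', W_insD, if_neg (by omega), if_neg (by omega), if_pos h2]
  have hW4 : ∀ k, n < k → W π' k = n + 1 := by
    intro k h1; rw [hπ', W_insD, if_neg (by omega), if_neg (by omega), if_neg (by omega)]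
  -- part 1
  have part1 : (∑ k ∈ Finset.range j₀, dterm π' k) + ed σ j₀
      = ∑ k ∈ Finset.range j₀, dterm σ k := by
    cases hm : j₀ with
    | zero => simp [ed]
    | succ m =>
      rw [Finset.sum_range_succ, Finset.sum_range_succ]
      have hlast : dterm π' m = 0 := by
        unfold dterm
        rw [show m + 1 = j₀ by omega, hW2, hW1 m (by omega), if_neg (by have := W_lt σ (show m < n by omega); omega)]
      have hmid : ∑ k ∈ Finset.range m, dterm π' k = ∑ k ∈ Finset.range m, dterm σ k := by
        refine Finset.sum_congr rfl fun k hk => ?_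
        have hk' := Finset.mem_range.mp hk
        unfold dterm
        rw [hW1 k (by omega), hW1 (k+1) (by omega)]
      rw [hlast, add_zero, hmid, ← hm, show j₀ = m + 1 from hm, ed_succ]
  -- part 2
  have part2 : ∑ k ∈ Finset.Ico j₀ (n + 1), dterm π' k
      = {((n : ℕ), W σ j₀)} + ∑ k ∈ Finset.Ico j₀ n, dterm σ k := by
    rw [Finset.sum_eq_sum_Ico_succ_bot (by omega) (dterm π')]
    have hfirst : dterm π' j₀ = {((n : ℕ), W σ j₀)} := by
      unfold dterm
      rw [hW2, hW3 (j₀ + 1) (by omega) (by omega), Nat.add_sub_cancel,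
        if_pos (W_lt σ hj)]
    rw [hfirst]
    congr 1
    rw [Finset.sum_Ico_eq_sum_range (fun k => dterm π' k) (j₀ + 1) (n + 1),
      Finset.sum_Ico_eq_sum_range (fun k => dterm σ k) j₀ n]
    have : n + 1 - (j₀ + 1) = n - j₀ := by omega
    rw [this]
    refine Finset.sum_congr rfl fun i hi => ?_
    have hi' := Finset.mem_range.mp hi
    unfold dterm
    rw [show j₀ + 1 + i = (j₀ + i) + 1 by omega]
    rw [hW3 ((j₀ + i) + 1) (by omega) (by omega), Nat.add_sub_cancel]
    by_cases hcase : j₀ + i + 2 ≤ n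
    · rw [hW3 ((j₀ + i) + 1 + 1) (by omega) (by omega)]
      congr 1
    · have h1 : W π' (j₀ + i + 1 + 1) = n + 1 := hW4 _ (by omega)
      have h2 : W σ (j₀ + i + 1) = n := W_of_ge σ (by omega)
      rw [h1, h2]
      have h3 := W_le σ (j₀ + i)
      rw [if_neg (by omega), if_neg (by omega)]
  calc PD π' + ed σ j₀
      = ((∑ k ∈ Finset.range j₀, dterm π' k) + ed σ j₀) + ∑ k ∈ Finset.Ico j₀ (n+1), dterm π' k := by
        rw [PD, ← Finset.sum_range_add_sum_Ico (dterm π') (show j₀ ≤ n + 1 by omega)]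
        abel
    _ = {((n : ℕ), W σ j₀)} + PD σ := by
        rw [part1, part2, PD, ← Finset.sum_range_add_sum_Ico (dterm σ) (show j₀ ≤ n by omega)]
        abel


/-! ### helpers -/

lemma addhom_sum {M : Type*} [AddCommMonoid M] (F : Multiset (ℕ × ℕ) → M) (h0 : F 0 = 0)
    (hadd : ∀ a b, F (a + b) = F a + F b) (s : Finset ℕ) (m : ℕ → Multiset (ℕ × ℕ)) :
    F (∑ i ∈ s, m i) = ∑ i ∈ s, F (m i) := by
  induction s using Finset.cons_induction with
  | empty => simpa
  | cons a s ha ih => rw [Finset.sum_cons, Finset.sum_cons, hadd, ih]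

lemma cond_eq (A B : Multiset (ℕ × ℕ)) (a b : ℕ × ℕ) :
    ({a} + A = B + {b}) ↔ (a ::ₘ A = b ::ₘ B) := by
  rw [Multiset.singleton_add, add_comm B, Multiset.singleton_add]

/-- the number of children of a permutation with pair-statistic `Q` whose statistic is `P` -/
def gf (n : ℕ) (P Q : Multiset (ℕ × ℕ)) : ℕ :=
  (if Q = P then 1 else 0)
  + (Multiset.map (fun q : ℕ × ℕ => if (n, q.2) ::ₘ Q = q ::ₘ P then 1 else 0) Q).sum
  + ∑ v ∈ (Finset.range n).filter (fun v => v ∉ Multiset.map Prod.snd Q),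
      (if (n, v) ::ₘ Q = P then 1 else 0)

lemma map_sum_PC (σ : Perm (Fin n)) (h : ℕ × ℕ → ℕ) :
    (Multiset.map h (PC σ)).sum = ∑ k ∈ Finset.range n, (Multiset.map h (cterm σ k)).sum := by
  unfold PC
  exact addhom_sum (fun m => (Multiset.map h m).sum) rfl
    (fun a b => by
      show (Multiset.map h (a + b)).sum = (Multiset.map h a).sum + (Multiset.map h b).sum
      rw [Multiset.map_add, Multiset.sum_add]) _ _

lemma map_sum_PD (σ : Perm (Fin n)) (h : ℕ × ℕ → ℕ) :
    (Multiset.map h (PD σ)).sum = ∑ k ∈ Finset.range n, (Multiset.map h (dterm σ k)).sum := by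
  unfold PD
  exact addhom_sum (fun m => (Multiset.map h m).sum) rfl
    (fun a b => by
      show (Multiset.map h (a + b)).sum = (Multiset.map h a).sum + (Multiset.map h b).sum
      rw [Multiset.map_add, Multiset.sum_add]) _ _

lemma snd_PC_mem (σ : Perm (Fin n)) (v : ℕ) :
    v ∈ Multiset.map Prod.snd (PC σ) ↔ (v < n ∧ v < W σ v) := by
  rw [show Multiset.map Prod.snd (PC σ)
      = ∑ k ∈ Finset.range n, Multiset.map Prod.snd (cterm σ k) from
    addhom_sum (Multiset.map Prod.snd) rfl (fun a b => Multiset.map_add _ a b) _ _]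
  rw [Multiset.mem_sum]
  constructor
  · rintro ⟨k, hk, hv⟩
    unfold cterm at hv
    split_ifs at hv with h
    · simp only [Multiset.map_singleton, Multiset.mem_singleton] at hv
      subst hv
      exact ⟨Finset.mem_range.mp hk, h⟩
    · simp at hv
  · rintro ⟨h1, h2⟩
    refine ⟨v, Finset.mem_range.mpr h1, ?_⟩
    unfold cterm
    rw [if_pos h2]
    simp

lemma snd_PD_mem (σ : Perm (Fin n)) (v : ℕ) :
    v ∈ Multiset.map Prod.snd (PD σ) ↔
      ∃ k, k < n ∧ (0 < k ∧ W σ k < W σ (k - 1)) ∧ v = W σ k := by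
  rw [show Multiset.map Prod.snd (PD σ)
      = ∑ k ∈ Finset.range n, Multiset.map Prod.snd (dterm σ k) from
    addhom_sum (Multiset.map Prod.snd) rfl (fun a b => Multiset.map_add _ a b) _ _]
  rw [Multiset.mem_sum]
  constructor
  · rintro ⟨k, hk, hv⟩
    have hk' := Finset.mem_range.mp hk
    unfold dterm at hv
    split_ifs at hv with h
    · simp only [Multiset.map_singleton, Multiset.mem_singleton] at hv
      subst hv
      have hlt : k + 1 < n := by
        have h1 := W_lt σ hk'
        have := (W_lt_iff σ (k := k + 1)).mp (by omega)
        omega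
      exact ⟨k + 1, hlt, ⟨by omega, by simpa using h⟩, by simp⟩
    · simp at hv
  · rintro ⟨k, hk, ⟨hk0, hdesc⟩, hv⟩
    refine ⟨k - 1, Finset.mem_range.mpr (by omega), ?_⟩
    unfold dterm
    rw [show k - 1 + 1 = k by omega, if_pos hdesc]
    simp [hv]

lemma countC (σ : Perm (Fin n)) (P : Multiset (ℕ × ℕ)) :
    (∑ i : Fin (n + 1), if PC (insC σ i) = P then 1 else 0) = gf n P (PC σ) := by
  rw [Fin.sum_univ_castSucc]
  have hlast : (if PC (insC σ (Fin.last n)) = P then 1 else 0) = (if PC σ = P then 1 else 0) := by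
    rw [PC_insC_last]
  have hmain : ∀ i : Fin n, (if PC (insC σ i.castSucc) = P then 1 else 0)
      = (if {((n : ℕ), (i : ℕ))} + PC σ = P + cterm σ (i : ℕ) then 1 else 0) := by
    intro i
    have hi : ((i.castSucc : Fin (n + 1)) : ℕ) < n := by simpa using i.isLt
    have h2 := PC_insC σ i.castSucc hi
    simp only [Fin.coe_castSucc] at h2
    refine if_congr ?_ rfl rfl
    constructor
    · intro h; rw [← h2, h]
    · intro h
      have h3 : PC (insC σ i.castSucc) + cterm σ (i : ℕ) = P + cterm σ (i : ℕ) := by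
        rw [h2, h]
      exact add_right_cancel h3
  simp only [hmain, hlast]
  rw [Fin.sum_univ_eq_sum_range
    (fun k => if {((n : ℕ), k)} + PC σ = P + cterm σ k then 1 else 0) n]
  rw [← Finset.sum_filter_add_sum_filter_not (Finset.range n) (fun k => k < W σ k)]
  have hexc : ∑ k ∈ (Finset.range n).filter (fun k => k < W σ k),
      (if {((n : ℕ), k)} + PC σ = P + cterm σ k then 1 else 0)
      = (Multiset.map (fun q : ℕ × ℕ => if (n, q.2) ::ₘ PC σ = q ::ₘ P then 1 else 0) (PC σ)).sum := by
    rw [map_sum_PC σ (fun q : ℕ × ℕ => if (n, q.2) ::ₘ PC σ = q ::ₘ P then 1 else 0)]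
    rw [Finset.sum_filter]
    refine Finset.sum_congr rfl fun k hk => ?_
    by_cases hx : k < W σ k
    · rw [if_pos hx]
      unfold cterm
      rw [if_pos hx]
      simp only [Multiset.map_singleton, Multiset.sum_singleton]
      exact if_congr (cond_eq (PC σ) P ((n : ℕ), k) (W σ k, k)) rfl rfl
    · rw [if_neg hx]
      unfold cterm
      rw [if_neg hx]
      simp
  have hnon : ∑ k ∈ (Finset.range n).filter (fun k => ¬ k < W σ k),
      (if {((n : ℕ), k)} + PC σ = P + cterm σ k then 1 else 0)
      = ∑ v ∈ (Finset.range n).filter (fun v => v ∉ Multiset.map Prod.snd (PC σ)),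
        (if (n, v) ::ₘ PC σ = P then 1 else 0) := by
    have hset : (Finset.range n).filter (fun k => ¬ k < W σ k)
        = (Finset.range n).filter (fun v => v ∉ Multiset.map Prod.snd (PC σ)) := by
      refine Finset.filter_congr fun k hk => ?_
      have hk' := Finset.mem_range.mp hk
      rw [snd_PC_mem]
      constructor
      · intro h hmem; exact h hmem.2
      · intro h hlt; exact h ⟨hk', hlt⟩
    rw [hset]
    refine Finset.sum_congr rfl fun k hk => ?_
    have hk2 : ¬ k < W σ k := by
      rw [Finset.mem_filter, snd_PC_mem] at hk
      intro h; exact hk.2 ⟨Finset.mem_range.mp hk.1, h⟩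
    unfold cterm
    rw [if_neg hk2, add_zero, Multiset.singleton_add]
  rw [hexc, hnon, gf]
  omega

lemma countD (σ : Perm (Fin n)) (P : Multiset (ℕ × ℕ)) :
    (∑ j : Fin (n + 1), if PD (insD σ j) = P then 1 else 0) = gf n P (PD σ) := by
  rw [Fin.sum_univ_castSucc]
  have hlast : (if PD (insD σ (Fin.last n)) = P then 1 else 0) = (if PD σ = P then 1 else 0) := by
    rw [PD_insD_last]
  have hmain : ∀ j : Fin n, (if PD (insD σ j.castSucc) = P then 1 else 0)
      = (if {((n : ℕ), W σ (j : ℕ))} + PD σ = P + ed σ (j : ℕ) then 1 else 0) := by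
    intro j
    have hj : ((j.castSucc : Fin (n + 1)) : ℕ) < n := by simpa using j.isLt
    have h2 := PD_insD σ j.castSucc hj
    simp only [Fin.coe_castSucc] at h2
    refine if_congr ?_ rfl rfl
    constructor
    · intro h; rw [← h2, h]
    · intro h
      have h3 : PD (insD σ j.castSucc) + ed σ (j : ℕ) = P + ed σ (j : ℕ) := by
        rw [h2, h]
      exact add_right_cancel h3
  simp only [hmain, hlast]
  rw [Fin.sum_univ_eq_sum_range
    (fun k => if {((n : ℕ), W σ k)} + PD σ = P + ed σ k then 1 else 0) n]
  rw [← Finset.sum_filter_add_sum_filter_not (Finset.range n)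
    (fun k => 0 < k ∧ W σ k < W σ (k - 1))]
  have hdb : ∑ k ∈ (Finset.range n).filter (fun k => 0 < k ∧ W σ k < W σ (k - 1)),
      (if {((n : ℕ), W σ k)} + PD σ = P + ed σ k then 1 else 0)
      = (Multiset.map (fun q : ℕ × ℕ => if (n, q.2) ::ₘ PD σ = q ::ₘ P then 1 else 0) (PD σ)).sum := by
    rw [map_sum_PD σ (fun q : ℕ × ℕ => if (n, q.2) ::ₘ PD σ = q ::ₘ P then 1 else 0)]
    have step2 : ∑ k ∈ Finset.range n,
        (Multiset.map (fun q : ℕ × ℕ => if (n, q.2) ::ₘ PD σ = q ::ₘ P then 1 else 0)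
          (dterm σ k)).sum
        = ∑ k ∈ (Finset.range n).filter (fun k => W σ (k + 1) < W σ k),
          (if (n, W σ (k + 1)) ::ₘ PD σ = (W σ k, W σ (k + 1)) ::ₘ P then 1 else 0) := by
      rw [Finset.sum_filter]
      refine Finset.sum_congr rfl fun k hk => ?_
      by_cases hx : W σ (k + 1) < W σ k
      · unfold dterm
        rw [if_pos hx, if_pos hx]
        simp
      · unfold dterm
        rw [if_neg hx, if_neg hx]
        simp
    rw [step2]
    refine Finset.sum_bij (fun (k : ℕ) _ => k - 1) ?_ ?_ ?_ ?_
    · intro k hk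
      rw [Finset.mem_filter] at hk
      obtain ⟨hkr, hk0, hdesc⟩ := hk
      rw [Finset.mem_filter]
      refine ⟨Finset.mem_range.mpr (by have := Finset.mem_range.mp hkr; omega), ?_⟩
      rw [show k - 1 + 1 = k by omega]
      exact hdesc
    · intro k1 h1 k2 h2 heq
      rw [Finset.mem_filter] at h1 h2
      omega
    · intro b hb
      rw [Finset.mem_filter] at hb
      obtain ⟨hbr, hdesc⟩ := hb
      have hbr' := Finset.mem_range.mp hbr
      have hlt : b + 1 < n := by
        have h1 := W_lt σ hbr'
        have := (W_lt_iff σ (k := b + 1)).mp (by omega)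
        omega
      refine ⟨b + 1, ?_, by omega⟩
      rw [Finset.mem_filter]
      exact ⟨Finset.mem_range.mpr hlt, by omega, by simpa using hdesc⟩
    · intro k hk
      rw [Finset.mem_filter] at hk
      obtain ⟨hkr, hk0, hdesc⟩ := hk
      unfold ed
      rw [if_pos (show 0 < k ∧ W σ k < W σ (k - 1) from ⟨hk0, hdesc⟩)]
      refine if_congr ?_ rfl rfl
      rw [show k - 1 + 1 = k by omega]
      exact cond_eq (PD σ) P ((n : ℕ), W σ k) (W σ (k - 1), W σ k)
  have hnd : ∑ k ∈ (Finset.range n).filter (fun k => ¬ (0 < k ∧ W σ k < W σ (k - 1))),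
      (if {((n : ℕ), W σ k)} + PD σ = P + ed σ k then 1 else 0)
      = ∑ v ∈ (Finset.range n).filter (fun v => v ∉ Multiset.map Prod.snd (PD σ)),
        (if (n, v) ::ₘ PD σ = P then 1 else 0) := by
    refine Finset.sum_bij (fun (k : ℕ) _ => W σ k) ?_ ?_ ?_ ?_
    · intro k hk
      rw [Finset.mem_filter] at hk
      obtain ⟨hkr, hkdb⟩ := hk
      have hkr' := Finset.mem_range.mp hkr
      rw [Finset.mem_filter]
      refine ⟨Finset.mem_range.mpr (W_lt σ hkr'), ?_⟩
      rw [snd_PD_mem]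
      rintro ⟨k2, hk2n, hdb2, hval⟩
      have : k = k2 := W_inj σ hkr' hk2n hval
      subst this
      exact hkdb hdb2
    · intro k1 h1 k2 h2 heq
      rw [Finset.mem_filter] at h1 h2
      exact W_inj σ (Finset.mem_range.mp h1.1) (Finset.mem_range.mp h2.1) heq
    · intro v hv
      rw [Finset.mem_filter] at hv
      obtain ⟨hvr, hvs⟩ := hv
      obtain ⟨k, hkn, hWk⟩ := W_surj σ (Finset.mem_range.mp hvr)
      refine ⟨k, ?_, hWk⟩
      rw [Finset.mem_filter]
      refine ⟨Finset.mem_range.mpr hkn, ?_⟩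
      intro hdbk
      exact hvs ((snd_PD_mem σ v).mpr ⟨k, hkn, hdbk, hWk.symm⟩)
    · intro k hk
      rw [Finset.mem_filter] at hk
      unfold ed
      rw [if_neg hk.2, add_zero, Multiset.singleton_add]
  rw [hdb, hnd, gf]
  omega


/-! ### injectivity of the uncurried insertions -/

lemma eq_of_W {σ σ' : Perm (Fin n)} (a : Fin n) (h : W σ (a : ℕ) = W σ' (a : ℕ)) :
    σ a = σ' a := by
  rw [W_of_lt σ a.isLt, W_of_lt σ' a.isLt] at h
  exact Fin.ext (by simpa [Fin.eta] using h)

lemma insC_uncurry_inj :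
    Function.Injective (fun x : Perm (Fin n) × Fin (n + 1) => insC x.1 x.2) := by
  rintro ⟨σ, i⟩ ⟨σ', i'⟩ h
  dsimp only at h
  have hWeq : ∀ k, W (insC σ i) k = W (insC σ' i') k := fun k => by rw [h]
  have hi := i.isLt; have hi' := i'.isLt
  have hii : (i : ℕ) = (i' : ℕ) := by
    by_contra hne
    have h1 := hWeq (i : ℕ)
    rw [W_insC, if_pos rfl, W_insC, if_neg hne] at h1
    by_cases hc : (i : ℕ) = n
    · rw [if_pos hc] at h1
      have := W_lt σ' (show (i' : ℕ) < n by omega)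
      omega
    · rw [if_neg hc, if_pos (by omega)] at h1
      have := W_lt σ' (show (i : ℕ) < n by omega)
      omega
  have hifin : i = i' := Fin.ext hii
  subst hifin
  suffices hσ : σ = σ' by rw [hσ]
  refine Equiv.ext fun a => ?_
  have ha := a.isLt
  by_cases hcase : (a : ℕ) = (i : ℕ)
  · have h1 := hWeq n
    simp only [W_insC] at h1
    refine eq_of_W a ?_
    rw [hcase]
    split_ifs at h1 <;> omega
  · have h1 := hWeq (a : ℕ)
    simp only [W_insC] at h1
    refine eq_of_W a ?_
    split_ifs at h1 <;> omega

lemma insD_uncurry_inj :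
    Function.Injective (fun x : Perm (Fin n) × Fin (n + 1) => insD x.1 x.2) := by
  rintro ⟨σ, j⟩ ⟨σ', j'⟩ h
  dsimp only at h
  have hWeq : ∀ k, W (insD σ j) k = W (insD σ' j') k := fun k => by rw [h]
  have hj := j.isLt; have hj' := j'.isLt
  have hjj : (j : ℕ) = (j' : ℕ) := by
    by_contra hne
    have h1 := hWeq (j : ℕ)
    rw [W_insD, if_neg (lt_irrefl _), if_pos rfl, W_insD] at h1
    by_cases hc : (j : ℕ) < (j' : ℕ)
    · rw [if_pos hc] at h1
      have := W_lt σ' (show (j : ℕ) < n by omega)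
      omega
    · rw [if_neg hc, if_neg hne, if_pos (by omega)] at h1
      have := W_lt σ' (show (j : ℕ) - 1 < n by omega)
      omega
  have hjfin : j = j' := Fin.ext hjj
  subst hjfin
  suffices hσ : σ = σ' by rw [hσ]
  refine Equiv.ext fun a => ?_
  have ha := a.isLt
  by_cases hcase : (a : ℕ) < (j : ℕ)
  · have h1 := hWeq (a : ℕ)
    simp only [W_insD] at h1
    refine eq_of_W a ?_
    split_ifs at h1 <;> omega
  · have h1 := hWeq ((a : ℕ) + 1)
    simp only [W_insD, Nat.add_sub_cancel] at h1
    refine eq_of_W a ?_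
    split_ifs at h1 <;> omega

/-! ### transfer lemmas -/

lemma card_filter_eq_sum_ins {α β : Type*} [Fintype α] [Fintype β] [DecidableEq β]
    (F : α → β) (hinj : Function.Injective F) (hcard : Fintype.card α = Fintype.card β)
    (p : β → Prop) [DecidablePred p] :
    ((Finset.univ : Finset β).filter fun b => p b).card = ∑ a : α, if p (F a) then 1 else 0 := by
  have hbij : Function.Bijective F := (Fintype.bijective_iff_injective_and_card F).mpr ⟨hinj, hcard⟩
  rw [← Finset.card_filter]
  have himg : ((Finset.univ : Finset β).filter fun b => p b)
      = ((Finset.univ : Finset α).filter fun a => p (F a)).image F := by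
    ext b
    simp only [Finset.mem_filter, Finset.mem_image, Finset.mem_univ, true_and]
    constructor
    · intro hb
      obtain ⟨a, rfl⟩ := hbij.surjective b
      exact ⟨a, hb, rfl⟩
    · rintro ⟨a, ha, rfl⟩; exact ha
  rw [himg, Finset.card_image_of_injective _ hinj]

lemma sum_eq_fiber_sum {γ β : Type*} [Fintype γ] [DecidableEq β] (u : γ → β) (T : Finset β)
    (hu : ∀ a, u a ∈ T) (F : β → ℕ) :
    ∑ a : γ, F (u a) = ∑ b ∈ T, ((Finset.univ : Finset γ).filter fun a => u a = b).card * F b := by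
  have step : ∀ a : γ, F (u a) = ∑ b ∈ T, if u a = b then F b else 0 := by
    intro a
    rw [Finset.sum_ite_eq T (u a) F, if_pos (hu a)]
  rw [Finset.sum_congr rfl (fun a _ => step a), Finset.sum_comm]
  refine Finset.sum_congr rfl fun b _ => ?_
  rw [Finset.sum_ite, Finset.sum_const_zero, add_zero, Finset.sum_const, smul_eq_mul]

lemma sum_comp_transfer {α₁ α₂ β : Type*} [Fintype α₁] [Fintype α₂] [DecidableEq β]
    (f : α₁ → β) (g : α₂ → β)
    (h : ∀ b, ((Finset.univ : Finset α₁).filter fun a => f a = b).card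
      = ((Finset.univ : Finset α₂).filter fun a => g a = b).card)
    (F : β → ℕ) : ∑ a : α₁, F (f a) = ∑ a : α₂, F (g a) := by
  classical
  set T : Finset β := Finset.univ.image f ∪ Finset.univ.image g with hT
  rw [sum_eq_fiber_sum f T
    (fun a => Finset.mem_union_left _ (Finset.mem_image_of_mem f (Finset.mem_univ a))) F]
  rw [sum_eq_fiber_sum g T
    (fun a => Finset.mem_union_right _ (Finset.mem_image_of_mem g (Finset.mem_univ a))) F]
  exact Finset.sum_congr rfl fun b _ => by rw [h b]

/-! ### the key equidistribution -/

theorem key : ∀ (n : ℕ) (P : Multiset (ℕ × ℕ)),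
    ((Finset.univ : Finset (Perm (Fin n))).filter fun π => PC π = P).card
      = ((Finset.univ : Finset (Perm (Fin n))).filter fun π => PD π = P).card := by
  intro n
  induction n with
  | zero =>
    intro P
    exact congrArg Finset.card (Finset.filter_congr fun π _ => by rfl)
  | succ n ih =>
    intro P
    have hcard : Fintype.card (Perm (Fin n) × Fin (n + 1))
        = Fintype.card (Perm (Fin (n + 1))) := by
      rw [Fintype.card_prod, Fintype.card_perm, Fintype.card_perm, Fintype.card_fin,
        Fintype.card_fin, Nat.factorial_succ]
      ring
    rw [card_filter_eq_sum_ins (fun x : Perm (Fin n) × Fin (n + 1) => insC x.1 x.2)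
      insC_uncurry_inj hcard _]
    rw [card_filter_eq_sum_ins (fun x : Perm (Fin n) × Fin (n + 1) => insD x.1 x.2)
      insD_uncurry_inj hcard _]
    rw [Fintype.sum_prod_type, Fintype.sum_prod_type]
    calc (∑ σ : Perm (Fin n), ∑ i : Fin (n + 1), if PC (insC σ i) = P then 1 else 0)
        = ∑ σ : Perm (Fin n), gf n P (PC σ) := Finset.sum_congr rfl fun σ _ => countC σ P
      _ = ∑ σ : Perm (Fin n), gf n P (PD σ) := sum_comp_transfer PC PD ih (gf n P)
      _ = ∑ σ : Perm (Fin n), ∑ j : Fin (n + 1), if PD (insD σ j) = P then 1 else 0 :=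
          (Finset.sum_congr rfl fun σ _ => countD σ P).symm

lemma transfer {α₁ α₂ β : Type*} [Fintype α₁] [Fintype α₂] [DecidableEq β]
    (f : α₁ → β) (g : α₂ → β)
    (h : ∀ b, ((Finset.univ : Finset α₁).filter fun a => f a = b).card
      = ((Finset.univ : Finset α₂).filter fun a => g a = b).card)
    (p : β → Prop) [DecidablePred p] :
    ((Finset.univ : Finset α₁).filter fun a => p (f a)).card
      = ((Finset.univ : Finset α₂).filter fun a => p (g a)).card := by
  rw [Finset.card_filter, Finset.card_filter]
  exact sum_comp_transfer f g h (fun b => if p b then 1 else 0)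

/-! ### bridges to the named statistics -/

lemma exc_eq {N : ℕ} (π : Perm (Fin N)) : exc π = Multiset.card (PC π) := by
  unfold exc
  rw [show Multiset.card (PC π) = ∑ k ∈ Finset.range N, Multiset.card (cterm π k) from by
    unfold PC; exact addhom_sum Multiset.card rfl (fun a b => Multiset.card_add a b) _ _]
  rw [Finset.card_filter]
  rw [show (∑ i : Fin N, if i < π i then (1 : ℕ) else 0)
      = ∑ k ∈ Finset.range N, (if k < W π k then (1 : ℕ) else 0) from
    (Finset.sum_congr rfl fun i _ => by
      simp only [Fin.lt_def]
      rw [W_of_lt π i.isLt, Fin.eta]).trans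
      (Fin.sum_univ_eq_sum_range (fun k => if k < W π k then (1 : ℕ) else 0) N)]
  refine Finset.sum_congr rfl fun k _ => ?_
  unfold cterm
  split_ifs <;> simp

lemma dexc_eq {N : ℕ} (π : Perm (Fin N)) :
    dexc π = (Multiset.map (fun q : ℕ × ℕ => q.1 - q.2) (PC π)).sum := by
  unfold dexc
  rw [map_sum_PC]
  rw [Finset.sum_filter]
  rw [show (∑ i : Fin N, if i < π i then (π i : ℕ) - (i : ℕ) else 0)
      = ∑ k ∈ Finset.range N, (if k < W π k then W π k - k else 0) from
    (Finset.sum_congr rfl fun i _ => by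
      simp only [Fin.lt_def]
      rw [W_of_lt π i.isLt, Fin.eta]).trans
      (Fin.sum_univ_eq_sum_range (fun k => if k < W π k then W π k - k else 0) N)]
  refine Finset.sum_congr rfl fun k _ => ?_
  unfold cterm
  split_ifs <;> simp

lemma des_eq {N : ℕ} (π : Perm (Fin N)) : des π = Multiset.card (PD π) := by
  unfold des
  rw [show Multiset.card (PD π) = ∑ k ∈ Finset.range N, Multiset.card (dterm π k) from by
    unfold PD; exact addhom_sum Multiset.card rfl (fun a b => Multiset.card_add a b) _ _]
  rw [Finset.card_filter, Fintype.sum_prod_type]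
  have hinner : ∀ a : Fin N,
      (∑ b : Fin N, if ((b : ℕ) = (a : ℕ) + 1 ∧ π b < π a) then (1 : ℕ) else 0)
      = (fun k => if W π (k + 1) < W π k then (1 : ℕ) else 0) ((a : ℕ)) := by
    intro a
    dsimp only
    rw [show (∑ b : Fin N, if ((b : ℕ) = (a : ℕ) + 1 ∧ π b < π a) then (1 : ℕ) else 0)
        = ∑ k ∈ Finset.range N,
            (if (k = (a : ℕ) + 1 ∧ W π k < W π (a : ℕ)) then (1 : ℕ) else 0) from
      (Finset.sum_congr rfl fun b _ => by
        simp only [Fin.lt_def]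
        rw [W_of_lt π b.isLt, W_of_lt π a.isLt, Fin.eta, Fin.eta]).trans
        (Fin.sum_univ_eq_sum_range
          (fun k => if (k = (a : ℕ) + 1 ∧ W π k < W π (a : ℕ)) then (1 : ℕ) else 0) N)]
    have hsplit : ∀ k, (if (k = (a : ℕ) + 1 ∧ W π k < W π (a : ℕ)) then (1 : ℕ) else 0)
        = if k = (a : ℕ) + 1 then (if W π k < W π (a : ℕ) then (1 : ℕ) else 0) else 0 := by
      intro k
      by_cases h1 : k = (a : ℕ) + 1 <;> by_cases h2 : W π k < W π (a : ℕ) <;>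
        simp [h1, h2]
    rw [Finset.sum_congr rfl fun k _ => hsplit k,
      Finset.sum_ite_eq' (Finset.range N) ((a : ℕ) + 1)
        (fun k => if W π k < W π (a : ℕ) then (1 : ℕ) else 0)]
    by_cases hmem : (a : ℕ) + 1 ∈ Finset.range N
    · rw [if_pos hmem]
    · rw [if_neg hmem, eq_comm, if_neg]
      rw [W_of_ge π (by simpa using hmem)]
      have := W_le π (a : ℕ)
      omega
  rw [show (∑ a : Fin N, ∑ b : Fin N,
        if ((b : ℕ) = (a : ℕ) + 1 ∧ π b < π a) then (1 : ℕ) else 0)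
      = ∑ k ∈ Finset.range N, (if W π (k + 1) < W π k then (1 : ℕ) else 0) from
    (Finset.sum_congr rfl fun a _ => hinner a).trans
      (Fin.sum_univ_eq_sum_range (fun k => if W π (k + 1) < W π k then (1 : ℕ) else 0) N)]
  refine Finset.sum_congr rfl fun k _ => ?_
  unfold dterm
  split_ifs <;> simp

lemma ddes_eq {N : ℕ} (π : Perm (Fin N)) :
    ddes π = (Multiset.map (fun q : ℕ × ℕ => q.1 - q.2) (PD π)).sum := by
  unfold ddes
  rw [map_sum_PD]
  rw [Finset.sum_filter, Fintype.sum_prod_type]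
  have hinner : ∀ a : Fin N,
      (∑ b : Fin N, if ((b : ℕ) = (a : ℕ) + 1 ∧ π b < π a) then (π a : ℕ) - (π b : ℕ) else 0)
      = (fun k => if W π (k + 1) < W π k then W π k - W π (k + 1) else 0) ((a : ℕ)) := by
    intro a
    dsimp only
    rw [show (∑ b : Fin N, if ((b : ℕ) = (a : ℕ) + 1 ∧ π b < π a)
          then (π a : ℕ) - (π b : ℕ) else 0)
        = ∑ k ∈ Finset.range N, (if (k = (a : ℕ) + 1 ∧ W π k < W π (a : ℕ))
            then W π (a : ℕ) - W π k else 0) from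
      (Finset.sum_congr rfl fun b _ => by
        simp only [Fin.lt_def]
        rw [W_of_lt π b.isLt, W_of_lt π a.isLt, Fin.eta, Fin.eta]).trans
        (Fin.sum_univ_eq_sum_range (fun k => if (k = (a : ℕ) + 1 ∧ W π k < W π (a : ℕ))
            then W π (a : ℕ) - W π k else 0) N)]
    have hsplit : ∀ k, (if (k = (a : ℕ) + 1 ∧ W π k < W π (a : ℕ))
          then W π (a : ℕ) - W π k else 0)
        = if k = (a : ℕ) + 1 then (if W π k < W π (a : ℕ)
            then W π (a : ℕ) - W π k else 0) else 0 := by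
      intro k
      by_cases h1 : k = (a : ℕ) + 1 <;> by_cases h2 : W π k < W π (a : ℕ) <;>
        simp [h1, h2]
    rw [Finset.sum_congr rfl fun k _ => hsplit k,
      Finset.sum_ite_eq' (Finset.range N) ((a : ℕ) + 1)
        (fun k => if W π k < W π (a : ℕ) then W π (a : ℕ) - W π k else 0)]
    by_cases hmem : (a : ℕ) + 1 ∈ Finset.range N
    · rw [if_pos hmem]
    · rw [if_neg hmem, eq_comm, if_neg]
      rw [W_of_ge π (by simpa using hmem)]
      have := W_le π (a : ℕ)
      omega
  rw [show (∑ a : Fin N, ∑ b : Fin N,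
        if ((b : ℕ) = (a : ℕ) + 1 ∧ π b < π a) then (π a : ℕ) - (π b : ℕ) else 0)
      = ∑ k ∈ Finset.range N, (if W π (k + 1) < W π k then W π k - W π (k + 1) else 0) from
    (Finset.sum_congr rfl fun a _ => hinner a).trans
      (Fin.sum_univ_eq_sum_range
        (fun k => if W π (k + 1) < W π k then W π k - W π (k + 1) else 0) N)]
  refine Finset.sum_congr rfl fun k _ => ?_
  unfold dterm
  split_ifs <;> simp

end DD

open scoped Classical in
theorem dexc_ddes_equidistributed (n k e : ℕ) :
    (univ.filter (fun π : Equiv.Perm (Fin n) => dexc π = k)).card =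
      (univ.filter (fun π : Equiv.Perm (Fin n) => ddes π = k)).card ∧
    (univ.filter (fun π : Equiv.Perm (Fin n) => exc π = e ∧ dexc π = k)).card =
      (univ.filter (fun π : Equiv.Perm (Fin n) => des π = e ∧ ddes π = k)).card := by
  constructor
  · have e1 : (univ.filter (fun π : Equiv.Perm (Fin n) => dexc π = k))
        = univ.filter (fun π : Equiv.Perm (Fin n) =>
            (Multiset.map (fun q : ℕ × ℕ => q.1 - q.2) (DD.PC π)).sum = k) :=
      Finset.filter_congr fun π _ => by rw [DD.dexc_eq]
    have e2 : (univ.filter (fun π : Equiv.Perm (Fin n) => ddes π = k))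
        = univ.filter (fun π : Equiv.Perm (Fin n) =>
            (Multiset.map (fun q : ℕ × ℕ => q.1 - q.2) (DD.PD π)).sum = k) :=
      Finset.filter_congr fun π _ => by rw [DD.ddes_eq]
    rw [e1, e2]
    exact DD.transfer DD.PC DD.PD (DD.key n)
      (fun Q => (Multiset.map (fun q : ℕ × ℕ => q.1 - q.2) Q).sum = k)
  · have e1 : (univ.filter (fun π : Equiv.Perm (Fin n) => exc π = e ∧ dexc π = k))
        = univ.filter (fun π : Equiv.Perm (Fin n) =>
            Multiset.card (DD.PC π) = e ∧
              (Multiset.map (fun q : ℕ × ℕ => q.1 - q.2) (DD.PC π)).sum = k) :=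
      Finset.filter_congr fun π _ => by rw [DD.dexc_eq, DD.exc_eq]
    have e2 : (univ.filter (fun π : Equiv.Perm (Fin n) => des π = e ∧ ddes π = k))
        = univ.filter (fun π : Equiv.Perm (Fin n) =>
            Multiset.card (DD.PD π) = e ∧
              (Multiset.map (fun q : ℕ × ℕ => q.1 - q.2) (DD.PD π)).sum = k) :=
      Finset.filter_congr fun π _ => by rw [DD.ddes_eq, DD.des_eq]
    rw [e1, e2]
    exact DD.transfer DD.PC DD.PD (DD.key n)
      (fun Q => Multiset.card Q = e ∧
        (Multiset.map (fun q : ℕ × ℕ => q.1 - q.2) Q).sum = k)
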